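/- Let f : ℝ → ℝ be continuous. Define K(y) = ∫₀ʸ exp(−2∫₀ᶻ f(r) dr) dz and v(x) = ∫₀ˣ K(y)·exp(2∫₀ʸ f(r) dr) dy. Then v is C² on ℝ and satisfies (1/2)·v''(x) − f(x)·v'(x) = 1/2 for all x, and v(x) > 0 and v'(x) > 0 for all x > 0. -/

import Mathlib

open MeasureTheory Set intervalIntegral

lemma ftc_aux {g : ℝ → ℝ} (hg : Continuous g) (x : ℝ) :
    HasDerivAt (fun u => ∫ t in (0:ℝ)..u, g t) (g x) x :=
  integral_hasDerivAt_right (hg.intervalIntegrable 0 x)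
    hg.aestronglyMeasurable.stronglyMeasurableAtFilter hg.continuousAt

/-- For `f` continuous, with `K(y) = ∫₀ʸ exp(−2∫₀ᶻ f)` and
`v(x) = ∫₀ˣ K(y)·exp(2∫₀ʸ f) dy`, the function `v` is `C²`, solves
`(1/2)v'' − f·v' = 1/2`, and `v > 0`, `v' > 0` on `(0,∞)`. -/
theorem stmt3 (f : ℝ → ℝ) (hf : Continuous f)
    (K v : ℝ → ℝ)
    (hK : K = fun y => ∫ z in (0:ℝ)..y, Real.exp (-(2 * ∫ r in (0:ℝ)..z, f r)))
    (hv : v = fun x => ∫ y in (0:ℝ)..x, K y * Real.exp (2 * ∫ r in (0:ℝ)..y, f r)) :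
    ContDiff ℝ 2 v ∧
      (∀ x : ℝ, (1/2) * deriv (deriv v) x - f x * deriv v x = 1/2) ∧
      ∀ x : ℝ, 0 < x → 0 < v x ∧ 0 < deriv v x := by
  set F : ℝ → ℝ := fun z => ∫ r in (0:ℝ)..z, f r with hF
  have hFd : ∀ z, HasDerivAt F (f z) z := fun z => ftc_aux hf z
  have hFc : Continuous F := continuous_iff_continuousAt.2 fun x => (hFd x).continuousAt
  set g : ℝ → ℝ := fun z => Real.exp (-(2 * F z)) with hg
  have hgc : Continuous g := (continuous_const.mul hFc).neg.rexp
  have hKd : ∀ y, HasDerivAt K (g y) y := by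
    subst hK; exact fun y => ftc_aux hgc y
  have hKc : Continuous K := continuous_iff_continuousAt.2 fun x => (hKd x).continuousAt
  set h : ℝ → ℝ := fun y => K y * Real.exp (2 * F y) with hh
  have hhc : Continuous h := hKc.mul (continuous_const.mul hFc).rexp
  have hvd : ∀ x, HasDerivAt v (h x) x := by
    subst hv; exact fun x => ftc_aux hhc x
  have hdv : deriv v = h := funext fun x => (hvd x).deriv
  have hhd : ∀ x, HasDerivAt h (1 + 2 * f x * h x) x := by
    intro x
    have hE : HasDerivAt (fun y => Real.exp (2 * F y)) (Real.exp (2 * F x) * (2 * f x)) x := by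
      have := (((hFd x).const_mul 2).exp)
      convert this using 1
      try ring
    have : HasDerivAt (fun y => K y * Real.exp (2 * F y)) _ x := (hKd x).mul hE
    convert this using 1
    simp only [hg, hh]
    rw [← Real.exp_add]
    ring_nf
    rw [Real.exp_zero]
    ring
  have hdh : deriv h = fun x => 1 + 2 * f x * h x := funext fun x => (hhd x).deriv
  refine ⟨?_, ?_, ?_⟩
  · rw [show (2 : WithTop ℕ∞) = 1 + 1 from rfl, contDiff_succ_iff_deriv]
    refine ⟨fun x => (hvd x).differentiableAt, by simp, ?_⟩
    rw [hdv, contDiff_one_iff_deriv]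
    exact ⟨fun x => (hhd x).differentiableAt,
      hdh ▸ (continuous_const.add ((continuous_const.mul hf).mul hhc))⟩
  · intro x
    rw [hdv, hdh]
    ring
  · intro x hx
    have hKpos : ∀ y : ℝ, 0 < y → 0 < K y := by
      intro y hy
      rw [hK]
      exact intervalIntegral_pos_of_pos (hgc.intervalIntegrable 0 y) (fun z => Real.exp_pos _) hy
    have hhpos : ∀ y : ℝ, 0 < y → 0 < h y := fun y hy =>
      mul_pos (hKpos y hy) (Real.exp_pos _)
    refine ⟨?_, hdv ▸ hhpos x hx⟩
    subst hv
    exact intervalIntegral_pos_of_pos_on (hhc.intervalIntegrable 0 x)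
      (fun y hy => hhpos y hy.1) hx
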